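/- If T is a tree with at least 4 leaves that is not a star graph, then pd(T) < n₁(T), i.e., there exists a resolving partition of T with fewer than n₁(T) classes. -/

import Mathlib

open SimpleGraph

variable {V : Type*}

/-- Distance from a vertex to a set of vertices: `min_{u ∈ P} d(v,u)`. -/
noncomputable def distSet (G : SimpleGraph V) (v : V) (P : Set V) : ℕ :=
  sInf ((G.dist v) '' P)

/-- An ordered partition of `V` into `t` (nonempty) classes, encoded by a surjective
map `c : V → Fin t`, is resolving if distinct vertices have distinct partition
representations, i.e. distinct vectors of distances to the classes. -/
def IsResolvingPartition (G : SimpleGraph V) {t : ℕ} (c : V → Fin t) : Prop :=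
  Function.Surjective c ∧
    ∀ u v : V, (∀ i : Fin t, distSet G u {x | c x = i} = distSet G v {x | c x = i}) → u = v

/-- The partition dimension: the least `t` admitting a resolving partition into `t` classes. -/
noncomputable def partitionDim (G : SimpleGraph V) : ℕ :=
  sInf {t : ℕ | ∃ c : V → Fin t, IsResolvingPartition G c}

/-- A set `S` is a resolving set if distinct vertices have distinct vectors of
distances to the elements of `S`. -/
def IsResolvingSet (G : SimpleGraph V) (S : Set V) : Prop :=
  ∀ u v : V, (∀ w ∈ S, G.dist u w = G.dist v w) → u = v

/-- The metric dimension: the least cardinality of a resolving set. -/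
noncomputable def metricDim (G : SimpleGraph V) : ℕ :=
  sInf {k : ℕ | ∃ S : Set V, S.ncard = k ∧ IsResolvingSet G S}

/-- A leaf is a vertex of degree one. -/
def IsLeaf (G : SimpleGraph V) (v : V) : Prop := (G.neighborSet v).ncard = 1

/-- A major vertex is a vertex of degree at least three. -/
def IsMajor (G : SimpleGraph V) (v : V) : Prop := 3 ≤ (G.neighborSet v).ncard

/-- A path graph: a tree in which every vertex has degree at most two. -/
def IsPathGraph (G : SimpleGraph V) : Prop :=
  G.IsTree ∧ ∀ v : V, (G.neighborSet v).ncard ≤ 2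

/-- `u` is a terminal vertex of the major vertex `v` if `u` is a leaf and
`d(u,v) < d(u,w)` for every other major vertex `w`. -/
def IsTerminalOf (G : SimpleGraph V) (u v : V) : Prop :=
  IsLeaf G u ∧ IsMajor G v ∧ ∀ w : V, IsMajor G w → w ≠ v → G.dist u v < G.dist u w

/-- The terminal degree of a vertex: its number of terminal vertices. -/
noncomputable def terminalDegree (G : SimpleGraph V) (v : V) : ℕ :=
  {u | IsTerminalOf G u v}.ncard

/-- An exterior major vertex: a major vertex with positive terminal degree. -/
def IsExteriorMajor (G : SimpleGraph V) (v : V) : Prop :=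
  IsMajor G v ∧ 0 < terminalDegree G v

/-- `n₁(G)`: the number of leaves. -/
noncomputable def numLeaves (G : SimpleGraph V) : ℕ := {v | IsLeaf G v}.ncard

/-- `ex(G)`: the number of exterior major vertices. -/
noncomputable def numExteriorMajor (G : SimpleGraph V) : ℕ := {v | IsExteriorMajor G v}.ncard

/-- A support vertex: a vertex adjacent to a leaf. -/
def IsSupport (G : SimpleGraph V) (v : V) : Prop := ∃ u, G.Adj v u ∧ IsLeaf G u

/-- `ξ(G)`: the number of support vertices. -/
noncomputable def numSupport (G : SimpleGraph V) : ℕ := {v | IsSupport G v}.ncard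

/-- `θ(G)`: the maximum number of leaves adjacent to a single support vertex. -/
noncomputable def maxLeavesAtSupport (G : SimpleGraph V) : ℕ :=
  sSup {n : ℕ | ∃ v, IsSupport G v ∧ n = {u | G.Adj v u ∧ IsLeaf G u}.ncard}

/-- A star graph: one center vertex adjacent to all other vertices, each of which is a leaf. -/
def IsStar (G : SimpleGraph V) : Prop :=
  ∃ c : V, (∀ v : V, v ≠ c → G.Adj c v) ∧ ∀ v : V, v ≠ c → IsLeaf G v


namespace TreeTK
variable {V : Type*} {G : SimpleGraph V}

variable {V : Type*} {G : SimpleGraph V}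

/-- In a tree, every path realizes the distance. -/
lemma path_length_eq (hT : G.IsTree) {a b : V} (p : G.Walk a b) (hp : p.IsPath) :
    p.length = G.dist a b := by
  obtain ⟨q, hq, hql⟩ := hT.isConnected.exists_path_of_dist a b
  have := hT.IsAcyclic.path_unique ⟨p, hp⟩ ⟨q, hq⟩
  rw [show p = q from congrArg Subtype.val this, hql]

/-- Betweenness predicate. -/
def Btwn (G : SimpleGraph V) (a b c : V) : Prop := G.dist a b + G.dist b c = G.dist a c

lemma btw_left (a b : V) : Btwn G a a b := by simp [Btwn]
lemma btw_right (a b : V) : Btwn G a b b := by simp [Btwn]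

lemma Btwn.symm {a b c : V} (h : Btwn G a b c) : Btwn G c b a := by
  unfold Btwn at *
  rw [SimpleGraph.dist_comm (u := c) (v := b), SimpleGraph.dist_comm (u := b) (v := a), SimpleGraph.dist_comm (u := c) (v := a)]
  omega

lemma dist_triangle (hT : G.IsTree) (a b c : V) :
    G.dist a c ≤ G.dist a b + G.dist b c :=
  hT.isConnected.dist_triangle

lemma dist_eq_zero_iff (hT : G.IsTree) {a b : V} : G.dist a b = 0 ↔ a = b := by
  constructor
  · intro h
    rcases SimpleGraph.dist_eq_zero_iff_eq_or_not_reachable.mp h with h | h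
    · exact h
    · exact absurd (hT.isConnected a b) h
  · rintro rfl; simp

lemma dist_pos (hT : G.IsTree) {a b : V} (h : a ≠ b) : 0 < G.dist a b := by
  have h2 := (dist_eq_zero_iff (G := G) hT (a := a) (b := b))
  have h3 : ¬ (G.dist a b = 0) := fun hh => h (h2.mp hh)
  omega
  

/-- pure-arith: B a b c → B a c d → B a b d ∧ B b c d -/
lemma btw_trans_left (hT : G.IsTree) {a b c d : V} (h1 : Btwn G a b c) (h2 : Btwn G a c d) :
    Btwn G a b d ∧ Btwn G b c d := by
  unfold Btwn at *
  have t1 := dist_triangle hT b c d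
  have t2 := dist_triangle hT a b d
  have t3 := dist_triangle hT a b c
  have t4 := dist_triangle hT a c d
  constructor <;> omega



lemma exists_geodesic (hT : G.IsTree) (a b : V) :
    ∃ p : G.Walk a b, p.IsPath ∧ p.length = G.dist a b :=
  hT.isConnected.exists_path_of_dist a b

/-- L2a -/
lemma mem_support_of_btw (hT : G.IsTree) {a b z : V} (p : G.Walk a b) (hp : p.IsPath)
    (h : Btwn G a z b) : z ∈ p.support := by
  obtain ⟨q1, hq1, hl1⟩ := exists_geodesic hT a z
  obtain ⟨q2, hq2, hl2⟩ := exists_geodesic hT z b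
  have hlen : (q1.append q2).length = G.dist a b := by
    rw [Walk.length_append, hl1, hl2]; exact h
  have hpath := Walk.isPath_of_length_eq_dist _ hlen
  have := hT.IsAcyclic.path_unique ⟨q1.append q2, hpath⟩ ⟨p, hp⟩
  have heq : q1.append q2 = p := congrArg Subtype.val this
  rw [← heq]
  exact (SimpleGraph.Walk.mem_support_append_iff q1 q2).mpr (Or.inl (Walk.end_mem_support q1))

/-- L2b -/
lemma btw_of_mem_support (hT : G.IsTree) {a b z : V} (p : G.Walk a b) (hp : p.IsPath)
    (h : z ∈ p.support) : Btwn G a z b := by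
  classical
  have hspec := p.take_spec h
  have h1 : G.dist a z ≤ (p.takeUntil z h).length := dist_le _
  have h2 : G.dist z b ≤ (p.dropUntil z h).length := dist_le _
  have h3 : (p.takeUntil z h).length + (p.dropUntil z h).length = p.length := by
    rw [← Walk.length_append, hspec]
  have h4 : p.length = G.dist a b := path_length_eq hT p hp
  have h5 := dist_triangle hT a z b
  unfold Btwn
  omega

/-- L3' : uniqueness of points between at fixed distance -/
lemma btw_unique (hT : G.IsTree) {a b z z' : V} (h : Btwn G a z b) (h' : Btwn G a z' b)
    (hd : G.dist a z = G.dist a z') : z = z' := by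
  obtain ⟨p, hp, hpl⟩ := exists_geodesic hT a b
  have key : ∀ w : V, Btwn G a w b → w = p.getVert (G.dist a w) := by
    intro w hw
    obtain ⟨q1, hq1, hl1⟩ := exists_geodesic hT a w
    obtain ⟨q2, hq2, hl2⟩ := exists_geodesic hT w b
    have hlen : (q1.append q2).length = G.dist a b := by
      rw [Walk.length_append, hl1, hl2]; exact hw
    have hpath := Walk.isPath_of_length_eq_dist _ hlen
    have := hT.IsAcyclic.path_unique ⟨q1.append q2, hpath⟩ ⟨p, hp⟩
    have heq : q1.append q2 = p := congrArg Subtype.val this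
    rw [← heq, Walk.getVert_append]
    simp [hl1]
  rw [key z h, key z' h', hd]


/-- helper: appending two paths meeting only at the junction gives a path -/
lemma append_isPath {a b c : V} {p : G.Walk a b} {q : G.Walk b c}
    (hp : p.IsPath) (hq : q.IsPath)
    (h : ∀ z, z ∈ p.support → z ∈ q.support → z = b) : (p.append q).IsPath := by
  rw [Walk.isPath_def, Walk.support_append, List.nodup_append]
  have hqn := hq.support_nodup
  rw [q.support_eq_cons] at hqn
  rw [List.nodup_cons] at hqn
  refine ⟨hp.support_nodup, hqn.2, ?_⟩
  intro z hz w hz' hzw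
  subst hzw
  have hzq : z ∈ q.support := by
    rw [q.support_eq_cons]
    exact List.mem_cons_of_mem _ hz'
  have := h z hz hzq
  subst this
  exact hqn.1 hz'

lemma cons_nil_isPath {a b : V} (h : G.Adj a b) : (Walk.cons h Walk.nil).IsPath := by
  rw [Walk.isPath_def]
  simp [Walk.support_cons, h.ne]

/-- L4 -/
lemma adj_dist_cases (hT : G.IsTree) {z l : V} (h : G.Adj z l) (p : V) :
    G.dist p z + 1 = G.dist p l ∨ G.dist p l + 1 = G.dist p z := by
  have hzl : G.dist z l = 1 := (dist_eq_one_iff_adj).mpr h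
  have hlz : G.dist l z = 1 := (dist_eq_one_iff_adj).mpr h.symm
  have t1 := dist_triangle hT p z l
  have t2 := dist_triangle hT p l z
  rw [hzl] at t1; rw [hlz] at t2
  have hne : G.dist p z ≠ G.dist p l := by
    intro he
    have hpl : p ≠ l := by
      intro rfl'
      subst rfl'
      have h0 : G.dist p z = 0 := by rw [he]; simp
      exact h.ne ((dist_eq_zero_iff hT).mp h0).symm
    obtain ⟨q, hq, hql⟩ := exists_geodesic hT p z
    have hlns : l ∉ q.support := by
      intro hmem
      have hb := btw_of_mem_support hT q hq hmem
      unfold Btwn at hb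
      rw [hlz] at hb
      omega
    have hcp : (q.concat h).IsPath := by
      rw [Walk.concat]
      refine append_isPath hq (cons_nil_isPath h) ?_
      intro w hw hw'
      simp [Walk.support_cons, Walk.support_nil] at hw'
      rcases hw' with rfl | rfl
      · rfl
      · exact absurd hw hlns
    have : (q.concat h).length = G.dist p l := path_length_eq hT _ hcp
    rw [Walk.length_concat, hql] at this
    omega
  omega

/-- L5 (K) : unique parent -/
lemma parent_unique (hT : G.IsTree) {z1 z2 l p : V} (h1 : G.Adj z1 l) (h2 : G.Adj z2 l)
    (hd1 : G.dist p z1 < G.dist p l) (hd2 : G.dist p z2 < G.dist p l) : z1 = z2 := by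
  have e1 : G.dist p z1 + 1 = G.dist p l := by
    rcases adj_dist_cases hT h1 p with h | h
    · exact h
    · omega
  have e2 : G.dist p z2 + 1 = G.dist p l := by
    rcases adj_dist_cases hT h2 p with h | h
    · exact h
    · omega
  obtain ⟨q1, hq1, hl1⟩ := exists_geodesic hT p z1
  obtain ⟨q2, hq2, hl2⟩ := exists_geodesic hT p z2
  have hp1 : (q1.concat h1).IsPath := Walk.isPath_of_length_eq_dist _ (by
    rw [Walk.length_concat, hl1]; omega)
  have hp2 : (q2.concat h2).IsPath := Walk.isPath_of_length_eq_dist _ (by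
    rw [Walk.length_concat, hl2]; omega)
  have := hT.IsAcyclic.path_unique ⟨q1.concat h1, hp1⟩ ⟨q2.concat h2, hp2⟩
  have heq : q1.concat h1 = q2.concat h2 := congrArg Subtype.val this
  have g1 : (q1.concat h1).getVert (G.dist p z1) = z1 := by
    rw [Walk.concat, Walk.getVert_append]
    simp [hl1]
  have g2 : (q2.concat h2).getVert (G.dist p z2) = z2 := by
    rw [Walk.concat, Walk.getVert_append]
    simp [hl2]
  rw [← g1, ← g2, heq, show G.dist p z1 = G.dist p z2 by omega]

/-- L9 : penultimate vertex towards a -/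
lemma exists_parent (hT : G.IsTree) {a b : V} (h : a ≠ b) :
    ∃ n, G.Adj n b ∧ G.dist a n + 1 = G.dist a b ∧ Btwn G a n b := by
  obtain ⟨p, hp, hl⟩ := exists_geodesic hT b a
  cases p with
  | nil => exact absurd rfl h.symm
  | cons hadj q =>
    rename_i n
    have hq : q.IsPath := hp.of_cons
    have hql : q.length = G.dist n a := path_length_eq hT q hq
    have hlen : q.length + 1 = G.dist b a := by
      simpa [Walk.length_cons] using hl
    have hnb : G.dist n b = 1 := (dist_eq_one_iff_adj).mpr hadj.symm
    refine ⟨n, hadj.symm, ?_, ?_⟩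
    · rw [SimpleGraph.dist_comm (u := a) (v := n), ← hql,
        SimpleGraph.dist_comm (u := a) (v := b), ← hlen]
    · unfold Btwn
      rw [SimpleGraph.dist_comm (u := a) (v := n), ← hql, hnb,
        SimpleGraph.dist_comm (u := a) (v := b), ← hlen]

/-- third element -/
lemma exists_third {s : Set V} (hs : s.Finite) (h : 3 ≤ s.ncard) (a b : V) :
    ∃ z ∈ s, z ≠ a ∧ z ≠ b := by
  by_contra hc
  push_neg at hc
  have hsub : s ⊆ {a, b} := by
    intro z hz
    rcases Classical.em (z = a) with rfl | hza
    · exact Set.mem_insert _ _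
    · have := hc z hz hza
      exact Set.mem_insert_of_mem _ (by simp [this])
  have := Set.ncard_le_ncard hsub ((Set.finite_singleton b).insert a)
  have h2 : ({a, b} : Set V).ncard ≤ 2 := by
    have := Set.ncard_insert_le a ({b} : Set V)
    simpa using this
  omega

lemma exists_pair {s : Set V} (h : 2 ≤ s.ncard) :
    ∃ a ∈ s, ∃ b ∈ s, a ≠ b := by
  by_contra hc
  push_neg at hc
  rcases Set.eq_empty_or_nonempty s with rfl | ⟨a, ha⟩
  · simp at h
  · have hsub : s ⊆ {a} := by
      intro z hz
      have := hc z hz a ha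
      simp [this]
    have := Set.ncard_le_ncard hsub (Set.finite_singleton _)
    simp [Set.ncard_singleton] at this
    omega

/-- every vertex distinct from some other vertex has a neighbor (toward it) -/
lemma neighborSet_nonempty (hT : G.IsTree) {a b : V} (h : a ≠ b) :
    (G.neighborSet b).Nonempty := by
  obtain ⟨n, hadj, _, _⟩ := exists_parent hT h
  exact ⟨n, hadj.symm⟩

/-- L6: beyond-leaf lemma -/
lemma exists_leaf_beyond [Fintype V] (hT : G.IsTree) {p q : V} (h : p ≠ q) :
    ∃ l, (G.neighborSet l).ncard = 1 ∧ Btwn G p q l := by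
  classical
  set S : Finset V := Finset.univ.filter (fun z => Btwn G p q z) with hS
  have hqS : q ∈ S := by
    simp [hS, btw_right]
  obtain ⟨l, hlS, hmax⟩ := Finset.exists_max_image S (fun z => G.dist p z) ⟨q, hqS⟩
  have hlB : Btwn G p q l := by
    simpa [hS] using hlS
  have hpq : 0 < G.dist p q := dist_pos hT h
  have hpl : 0 < G.dist p l := by
    unfold Btwn at hlB
    omega
  have hlp : l ≠ p := by
    intro rfl'
    rw [rfl', SimpleGraph.dist_self] at hpl
    omega
  refine ⟨l, ?_, hlB⟩
  by_contra hleaf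
  obtain ⟨n, hnadj, hnd, _⟩ := exists_parent hT (Ne.symm hlp)
  have hfin : (G.neighborSet l).Finite := Set.toFinite _
  have h1 : 1 ≤ (G.neighborSet l).ncard := by
    have := (Set.ncard_pos hfin).mpr ⟨n, hnadj.symm⟩
    omega
  have h2 : 2 ≤ (G.neighborSet l).ncard := by omega
  obtain ⟨z1, hz1, z2, hz2, hz12⟩ := exists_pair h2
  have hzpick : ∃ z, G.Adj l z ∧ z ≠ n := by
    rcases Classical.em (z1 = n) with rfl | hn1
    · exact ⟨z2, hz2, fun he => hz12 he.symm⟩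
    · exact ⟨z1, hz1, hn1⟩
  obtain ⟨z, hzadj, hzn⟩ := hzpick
  have hzd : G.dist p l + 1 = G.dist p z := by
    rcases adj_dist_cases hT hzadj.symm p with hcase | hcase
    · exfalso
      apply hzn
      exact parent_unique hT (p := p) hzadj.symm hnadj (by omega) (by omega)
    · exact hcase
  have hzS : z ∈ S := by
    have hql : G.dist p q + G.dist q l = G.dist p l := hlB
    have t1 : G.dist q z ≤ G.dist q l + 1 := by
      have := dist_triangle hT q l z
      have hlz : G.dist l z = 1 := dist_eq_one_iff_adj.mpr hzadj
      omega
    have t2 : G.dist p z ≤ G.dist p q + G.dist q z := dist_triangle hT p q z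
    have : Btwn G p q z := by
      unfold Btwn
      omega
    simp [hS, this]
  have := hmax z hzS
  omega

/-- L7 : the workhorse collinearity lemma -/
lemma btw_four (hT : G.IsTree) {a b c d : V} (h1 : Btwn G a b c) (h2 : Btwn G b c d)
    (hbc : b ≠ c) : G.dist a d = G.dist a b + G.dist b c + G.dist c d := by
  obtain ⟨q1, hq1, hl1⟩ := exists_geodesic hT a b
  obtain ⟨q2, hq2, hl2⟩ := exists_geodesic hT b c
  obtain ⟨q3, hq3, hl3⟩ := exists_geodesic hT c d
  have hinner : (q2.append q3).IsPath := by
    refine append_isPath hq2 hq3 ?_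
    intro z hz2 hz3
    have b1 : Btwn G b z c := btw_of_mem_support hT q2 hq2 hz2
    have b2 : Btwn G c z d := btw_of_mem_support hT q3 hq3 hz3
    unfold Btwn at b1 b2 h2
    have t1 : G.dist b d ≤ G.dist b z + G.dist z d := dist_triangle hT b z d
    have c1 : G.dist z c = G.dist c z := SimpleGraph.dist_comm
    have hz0 : G.dist z c = 0 := by omega
    exact (dist_eq_zero_iff hT).mp hz0
  have houter : (q1.append (q2.append q3)).IsPath := by
    refine append_isPath hq1 hinner ?_
    intro z hz1 hz23
    have b1 : Btwn G a z b := btw_of_mem_support hT q1 hq1 hz1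
    rcases (SimpleGraph.Walk.mem_support_append_iff q2 q3).mp hz23 with hz2 | hz3
    · have b2 : Btwn G b z c := btw_of_mem_support hT q2 hq2 hz2
      unfold Btwn at b1 b2 h1
      have t1 : G.dist a c ≤ G.dist a z + G.dist z c := dist_triangle hT a z c
      have c1 : G.dist z b = G.dist b z := SimpleGraph.dist_comm
      have hz0 : G.dist z b = 0 := by omega
      exact (dist_eq_zero_iff hT).mp hz0
    · exfalso
      have b2 : Btwn G c z d := btw_of_mem_support hT q3 hq3 hz3
      unfold Btwn at b1 b2 h1 h2
      have t1 : G.dist b z ≤ G.dist b c + G.dist c z := dist_triangle hT b c z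
      have t2 : G.dist b d ≤ G.dist b z + G.dist z d := dist_triangle hT b z d
      have t3 : G.dist a c ≤ G.dist a z + G.dist z c := dist_triangle hT a z c
      have c1 : G.dist z b = G.dist b z := SimpleGraph.dist_comm
      have c2 : G.dist z c = G.dist c z := SimpleGraph.dist_comm
      have hbc0 : G.dist b c = 0 := by omega
      exact hbc ((dist_eq_zero_iff hT).mp hbc0)
  have hlen := path_length_eq hT _ houter
  rw [Walk.length_append, Walk.length_append, hl1, hl2, hl3] at hlen
  omega

/-- L8 : order on a line -/
lemma btw_of_btw_le (hT : G.IsTree) {x y p m : V} (h1 : Btwn G x p y) (h2 : Btwn G x m y)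
    (hle : G.dist x p ≤ G.dist x m) : Btwn G x p m := by
  classical
  obtain ⟨w, hw, hwl⟩ := exists_geodesic hT x y
  have hpmem : p ∈ w.support := mem_support_of_btw hT w hw h1
  have hspec := w.take_spec hpmem
  have hmmem : m ∈ w.support := mem_support_of_btw hT w hw h2
  rw [← hspec] at hmmem
  rcases (SimpleGraph.Walk.mem_support_append_iff _ _).mp hmmem with hm1 | hm2
  · have b1 : Btwn G x m p := btw_of_mem_support hT _ (hw.takeUntil hpmem) hm1
    have : G.dist m p = 0 := by
      unfold Btwn at b1
      omega
    have := (dist_eq_zero_iff hT).mp this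
    subst this
    exact btw_right _ _
  · have b1 : Btwn G p m y := btw_of_mem_support hT _ (hw.dropUntil hpmem) hm2
    unfold Btwn at *
    have c1 : G.dist p m = G.dist m p := SimpleGraph.dist_comm
    omega

/-- counting: a tree with ≥ 3 leaves has a vertex of degree ≥ 3 -/
lemma exists_major [Fintype V] (hT : G.IsTree)
    (hl : 3 ≤ {v | (G.neighborSet v).ncard = 1}.ncard) :
    ∃ v, 3 ≤ (G.neighborSet v).ncard := by
  classical
  by_contra hc
  push_neg at hc
  -- degrees
  have hdeg : ∀ v : V, (G.neighborSet v).ncard = G.degree v := by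
    intro v
    rw [SimpleGraph.degree, ← Set.ncard_coe_finset]
    congr 1
    simp [SimpleGraph.neighborFinset_def]
  have hcardV : 3 ≤ Fintype.card V := by
    have h1 : {v | (G.neighborSet v).ncard = 1}.ncard ≤ Fintype.card V := by
      have := Set.ncard_le_ncard (Set.subset_univ {v | (G.neighborSet v).ncard = 1})
        (Set.toFinite _)
      rwa [Set.ncard_univ, Nat.card_eq_fintype_card] at this
    omega
  have hmin : ∀ v : V, 1 ≤ G.degree v := by
    intro v
    obtain ⟨u, hu⟩ := Fintype.exists_ne_of_one_lt_card (by omega) v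
    obtain ⟨n, hn⟩ := neighborSet_nonempty hT hu
    rw [← hdeg]
    have : 0 < (G.neighborSet v).ncard := (Set.ncard_pos (Set.toFinite _)).mpr ⟨n, hn⟩
    omega
  have hmax : ∀ v : V, G.degree v ≤ 2 := by
    intro v
    have := hc v
    rw [hdeg] at this
    omega
  have hsumdeg : ∑ v : V, G.degree v = 2 * G.edgeFinset.card :=
    SimpleGraph.sum_degrees_eq_twice_card_edges G
  have hedge : G.edgeFinset.card + 1 = Fintype.card V := hT.card_edgeFinset
  have hsplit : ∑ _v : V, 2 = (∑ v : V, G.degree v) + ∑ v : V, (2 - G.degree v) := by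
    rw [← Finset.sum_add_distrib]
    apply Finset.sum_congr rfl
    intro v _
    have := hmax v
    omega
  have hsum2 : ∑ _v : V, 2 = 2 * Fintype.card V := by
    simp [Finset.sum_const, Finset.card_univ, Nat.mul_comm]
  have hS : ∑ v : V, (2 - G.degree v) = 2 := by omega
  set L : Finset V := Finset.univ.filter (fun v => G.degree v = 1) with hL
  have hLcard : 3 ≤ L.card := by
    have hset : {v | (G.neighborSet v).ncard = 1} = (↑L : Set V) := by
      ext v
      simp only [Set.mem_setOf_eq, hdeg v, hL, Finset.coe_filter, Finset.mem_univ,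
        true_and]
    rwa [hset, Set.ncard_coe_finset] at hl
  have hLle : L.card ≤ ∑ v : V, (2 - G.degree v) := by
    calc L.card = ∑ _v ∈ L, 1 := by simp
    _ ≤ ∑ v ∈ L, (2 - G.degree v) := by
        apply Finset.sum_le_sum
        intro v hv
        simp [hL] at hv
        omega
    _ ≤ ∑ v : V, (2 - G.degree v) := by
        apply Finset.sum_le_sum_of_subset
        exact Finset.subset_univ L
  omega


end TreeTK

section Helpers
open TreeTK
variable {V : Type*} {G : SimpleGraph V}

lemma distSet_le' {v s : V} {P : Set V} (h : s ∈ P) : distSet G v P ≤ G.dist v s :=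
  Nat.sInf_le ⟨s, h, rfl⟩

lemma distSet_exists' {v : V} {P : Set V} (h : P.Nonempty) :
    ∃ s ∈ P, distSet G v P = G.dist v s := by
  obtain ⟨s, hs⟩ := h
  have hne : ((G.dist v) '' P).Nonempty := ⟨_, s, hs, rfl⟩
  obtain ⟨t, ht, hteq⟩ := Nat.sInf_mem hne
  exact ⟨t, ht, hteq.symm⟩

lemma distSet_eq' {v : V} {P : Set V} {m : ℕ}
    (hlow : ∀ s ∈ P, m ≤ G.dist v s) (hup : ∃ s ∈ P, G.dist v s = m) :
    distSet G v P = m := by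
  obtain ⟨s, hs, hseq⟩ := hup
  have h1 : distSet G v P ≤ m := hseq ▸ distSet_le' hs
  obtain ⟨t, ht, hteq⟩ := distSet_exists' (G := G) (v := v) ⟨s, hs⟩
  have := hlow t ht
  omega

lemma distSet_zero_of_mem' {v : V} {P : Set V} (h : v ∈ P) : distSet G v P = 0 := by
  have h2 := distSet_le' (G := G) (v := v) h
  rw [SimpleGraph.dist_self] at h2
  omega

lemma distSet_singleton' {v l : V} : distSet G v {l} = G.dist v l := by
  unfold distSet
  rw [Set.image_singleton, csInf_singleton]

/-- transport a resolving partition along an index equivalence -/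
lemma transport_partition [Fintype V] {I : Type*} (c : V → I)
    (hsurj : Function.Surjective c)
    (hres : ∀ u v : V,
      (∀ i : I, distSet G u {x | c x = i} = distSet G v {x | c x = i}) → u = v)
    {t : ℕ} (e : I ≃ Fin t) : IsResolvingPartition G (fun v => e (c v)) := by
  constructor
  · intro i
    obtain ⟨v, hv⟩ := hsurj (e.symm i)
    exact ⟨v, by simp [hv]⟩
  · intro u v h
    apply hres
    intro i
    have h2 := h (e i)
    have hsets : ∀ j : I, {x | e (c x) = e j} = {x | c x = j} := by
      intro j
      ext z
      simp [e.injective.eq_iff]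
    rw [hsets i] at h2
    exact h2

lemma major_not_leaf {m : V} (hm : 3 ≤ (G.neighborSet m).ncard) : ¬ IsLeaf G m := by
  intro h
  unfold IsLeaf at h
  omega

end Helpers

section CaseTwoMajors
open TreeTK
variable {V : Type*} [Fintype V] {G : SimpleGraph V}

/-- core contradiction lemma for the two-majors case -/
lemma two_majors_core (hT : G.IsTree) {u w x y p q : V}
    (hu : 3 ≤ (G.neighborSet u).ncard) (hw : 3 ≤ (G.neighborSet w).ncard)
    (huw : u ≠ w) (hxleaf : IsLeaf G x) (hyleaf : IsLeaf G y)
    (hbx : Btwn G w u x) (hby : Btwn G u w y)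
    (hpq : p ≠ q) (hbpqx : Btwn G p q x) (hbqpy : Btwn G q p y)
    (H : ∀ l, IsLeaf G l → l ≠ x → l ≠ y → G.dist p l = G.dist q l) : False := by
  classical
  have hxy : x ≠ y := by
    intro rfl'
    subst rfl'
    unfold Btwn at hbx hby
    have c1 : G.dist w u = G.dist u w := SimpleGraph.dist_comm
    have c2 : G.dist w x = G.dist x w := SimpleGraph.dist_comm
    have c3 : G.dist u x = G.dist x u := SimpleGraph.dist_comm
    have h0 : G.dist u w = 0 := by omega
    exact huw ((dist_eq_zero_iff hT).mp h0)
  -- collinearity of x u w y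
  have hline1 : G.dist x y = G.dist x u + G.dist u w + G.dist w y :=
    btw_four hT hbx.symm hby huw
  have hBxuy : Btwn G x u y := by
    unfold Btwn at *
    have t1 := dist_triangle hT u w y
    have t2 := dist_triangle hT x u y
    omega
  have hBxwy : Btwn G x w y := by
    unfold Btwn at *
    have t1 := dist_triangle hT x u w
    have t2 := dist_triangle hT x w y
    omega
  -- collinearity of x q p y
  have hline2 : G.dist x y = G.dist x q + G.dist q p + G.dist p y :=
    btw_four hT hbpqx.symm hbqpy hpq.symm
  have hBxqy : Btwn G x q y := by
    unfold Btwn at *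
    have t1 := dist_triangle hT q p y
    have t2 := dist_triangle hT x q y
    omega
  have hBxpy : Btwn G x p y := by
    unfold Btwn at *
    have t1 := dist_triangle hT x q p
    have t2 := dist_triangle hT x p y
    omega
  have hdpq : 0 < G.dist p q := dist_pos hT hpq
  have hcpq : G.dist p q = G.dist q p := SimpleGraph.dist_comm
  -- Step B : each major vertex on the line is equidistant from p and q
  have keyB : ∀ m, 3 ≤ (G.neighborSet m).ncard → Btwn G x m y →
      G.dist p m = G.dist q m := by
    intro m hm hBxmy
    have hmx : m ≠ x := fun h => major_not_leaf hm (h ▸ hxleaf)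
    have hmy : m ≠ y := fun h => major_not_leaf hm (h ▸ hyleaf)
    obtain ⟨n1, hn1adj, hn1d, hn1b⟩ := exists_parent hT (Ne.symm hmx)
    obtain ⟨n2, hn2adj, hn2d, hn2b⟩ := exists_parent hT (Ne.symm hmy)
    have hm1 : G.dist m n1 = 1 := dist_eq_one_iff_adj.mpr hn1adj.symm
    have hm2 : G.dist m n2 = 1 := dist_eq_one_iff_adj.mpr hn2adj.symm
    have hxn2 : G.dist x n2 = G.dist x m + 1 := by
      have t1 := dist_triangle hT x m n2
      have t2 := dist_triangle hT x n2 y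
      have c1 : G.dist n2 y = G.dist y n2 := SimpleGraph.dist_comm
      have c2 : G.dist m y = G.dist y m := SimpleGraph.dist_comm
      unfold Btwn at hBxmy hn2b
      omega
    have hn12 : n1 ≠ n2 := by
      intro he
      rw [he] at hn1d
      omega
    obtain ⟨z, hzmem, hzn1, hzn2⟩ :=
      exists_third (Set.toFinite (G.neighborSet m)) hm n1 n2
    have hzadj : G.Adj m z := hzmem
    have hxz : G.dist x z = G.dist x m + 1 := by
      rcases adj_dist_cases hT hzadj.symm x with hc | hc
      · exact absurd (parent_unique hT (p := x) hzadj.symm hn1adj (by omega) (by omega)) hzn1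
      · omega
    have hyz : G.dist y z = G.dist y m + 1 := by
      rcases adj_dist_cases hT hzadj.symm y with hc | hc
      · exact absurd (parent_unique hT (p := y) hzadj.symm hn2adj (by omega) (by omega)) hzn2
      · omega
    obtain ⟨l, hlleaf, hlb⟩ := exists_leaf_beyond hT hzadj.ne
    have hmz1 : G.dist m z = 1 := dist_eq_one_iff_adj.mpr hzadj
    have hlx : l ≠ x := by
      intro he
      rw [he] at hlb
      unfold Btwn at hlb
      have c1 : G.dist z x = G.dist x z := SimpleGraph.dist_comm
      have c2 : G.dist m x = G.dist x m := SimpleGraph.dist_comm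
      omega
    have hly : l ≠ y := by
      intro he
      rw [he] at hlb
      unfold Btwn at hlb
      have c1 : G.dist z y = G.dist y z := SimpleGraph.dist_comm
      have c2 : G.dist m y = G.dist y m := SimpleGraph.dist_comm
      omega
    -- key : for r between x and y, distance to l decomposes through m
    have key : ∀ r, Btwn G x r y → G.dist r l = G.dist r m + G.dist m l := by
      intro r hBxry
      have hrz : G.dist r z = G.dist r m + 1 := by
        rcases Classical.em (r = m) with he | hrm
        · rw [he, SimpleGraph.dist_self]
          omega
        · rcases adj_dist_cases hT hzadj.symm r with hc | hc
          · -- impossible : z would be the parent of m toward r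
            exfalso
            obtain ⟨nr, hnradj, hnrd, hnrb⟩ := exists_parent hT hrm
            have hrnm : G.dist r m = G.dist x m - G.dist x r ∨
                G.dist r m = G.dist x r - G.dist x m := by
              rcases Nat.le_total (G.dist x r) (G.dist x m) with hle | hle
              · have := btw_of_btw_le hT hBxry hBxmy hle
                unfold Btwn at this
                left; omega
              · have := btw_of_btw_le hT hBxmy hBxry hle
                unfold Btwn at this
                have c1 : G.dist x m + G.dist m r = G.dist x r := this
                have c2 : G.dist m r = G.dist r m := SimpleGraph.dist_comm
                right; omega
            have hrm' : G.dist x r ≠ G.dist x m := by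
              intro he
              exact hrm (btw_unique hT hBxry hBxmy he)
            have hzeq : z = nr :=
              parent_unique hT (p := r) hzadj.symm hnradj (by omega) (by omega)
            -- nr must be n1 or n2
            rcases Nat.lt_or_ge (G.dist x r) (G.dist x m) with hlt | hge
            · have hBxrm := btw_of_btw_le hT hBxry hBxmy (le_of_lt hlt)
              unfold Btwn at hBxrm
              have hxnr : G.dist x nr ≤ G.dist x m - 1 := by
                have t1 := dist_triangle hT x r nr
                unfold Btwn at hnrb
                have c2 : G.dist r m = G.dist x m - G.dist x r := by omega
                omega
              have hxnr2 : G.dist x nr + 1 = G.dist x m := by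
                rcases adj_dist_cases hT hnradj x with hc2 | hc2
                · exact hc2
                · omega
              have : nr = n1 :=
                parent_unique hT (p := x) hnradj hn1adj (by omega) (by omega)
              exact hzn1 (hzeq.trans this)
            · have hlt : G.dist x m < G.dist x r := by omega
              have hBxmr := btw_of_btw_le hT hBxmy hBxry (le_of_lt hlt)
              unfold Btwn at hBxmr
              have hyr : G.dist r y = G.dist x y - G.dist x r := by
                unfold Btwn at hBxry
                omega
              have hym : G.dist m y = G.dist x y - G.dist x m := by
                unfold Btwn at hBxmy
                omega
              have hynr : G.dist y nr ≤ G.dist y m - 1 := by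
                have t1 := dist_triangle hT y r nr
                have hnrm1 : G.dist nr m = 1 := dist_eq_one_iff_adj.mpr hnradj
                unfold Btwn at hnrb hBxry hBxmy
                have c2 : G.dist m r = G.dist r m := SimpleGraph.dist_comm
                have c3 : G.dist y r = G.dist r y := SimpleGraph.dist_comm
                have c4 : G.dist m y = G.dist y m := SimpleGraph.dist_comm
                omega
              have hynr2 : G.dist y nr + 1 = G.dist y m := by
                rcases adj_dist_cases hT hnradj y with hc2 | hc2
                · exact hc2
                · omega
              have : nr = n2 :=
                parent_unique hT (p := y) hnradj hn2adj (by omega) (by omega)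
              exact hzn2 (hzeq.trans this)
          · omega
      have hBrmz : Btwn G r m z := by
        unfold Btwn
        omega
      have h4 := btw_four hT hBrmz hlb hzadj.ne
      unfold Btwn at hlb
      omega
    have hp' := key p hBxpy
    have hq' := key q hBxqy
    have := H l hlleaf hlx hly
    omega
  -- Step C : deduce positions and contradiction
  have hpu := keyB u hu hBxuy
  have hpw := keyB w hw hBxwy
  have posm : ∀ m, Btwn G x m y → G.dist p m = G.dist q m →
      2 * G.dist x m = G.dist x p + G.dist x q := by
    intro m hBxmy hdm
    have hmp : m ≠ p := by
      intro he
      rw [he, SimpleGraph.dist_self] at hdm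
      have h0 : q = p := (dist_eq_zero_iff hT).mp hdm.symm
      exact hpq h0.symm
    have hmq : m ≠ q := by
      intro he
      rw [he] at hdm
      rw [show G.dist q q = 0 from SimpleGraph.dist_self] at hdm
      exact hpq ((dist_eq_zero_iff hT).mp hdm)
    have hxpq : G.dist x p = G.dist x q + G.dist q p := by
      unfold Btwn at hbpqx
      have c1 : G.dist p q = G.dist q p := SimpleGraph.dist_comm
      have c2 : G.dist p x = G.dist x p := SimpleGraph.dist_comm
      have c3 : G.dist q x = G.dist x q := SimpleGraph.dist_comm
      omega
    have hne1 : G.dist x m ≠ G.dist x q := fun he => hmq (btw_unique hT hBxmy hBxqy he)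
    have hne2 : G.dist x m ≠ G.dist x p := fun he => hmp (btw_unique hT hBxmy hBxpy he)
    rcases Nat.lt_or_ge (G.dist x m) (G.dist x q) with hlt | hge
    · exfalso
      have h1 := btw_of_btw_le hT hBxmy hBxqy (le_of_lt hlt)
      have h2 := btw_of_btw_le hT hBxmy hBxpy (by omega)
      unfold Btwn at h1 h2
      have c1 : G.dist m q = G.dist q m := SimpleGraph.dist_comm
      have c2 : G.dist m p = G.dist p m := SimpleGraph.dist_comm
      omega
    · rcases Nat.lt_or_ge (G.dist x p) (G.dist x m) with hlt2 | hge2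
      · exfalso
        have h1 := btw_of_btw_le hT hBxqy hBxmy (by omega)
        have h2 := btw_of_btw_le hT hBxpy hBxmy (le_of_lt hlt2)
        unfold Btwn at h1 h2
        omega
      · have h1 := btw_of_btw_le hT hBxqy hBxmy (by omega)
        have h2 := btw_of_btw_le hT hBxmy hBxpy (by omega)
        unfold Btwn at h1 h2
        have c2 : G.dist m p = G.dist p m := SimpleGraph.dist_comm
        omega
  have hu2 := posm u hBxuy hpu
  have hw2 := posm w hBxwy hpw
  exact huw (btw_unique hT hBxuy hBxwy (by omega))


/-- Case 1 : the tree has two distinct major vertices -/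
lemma exists_partition_two_majors (hT : G.IsTree) (hl4 : 4 ≤ numLeaves G)
    {u w : V} (hu : 3 ≤ (G.neighborSet u).ncard) (hw : 3 ≤ (G.neighborSet w).ncard)
    (huw : u ≠ w) :
    ∃ c : V → Fin (numLeaves G - 1), IsResolvingPartition G c := by
  classical
  obtain ⟨x, hx1, hbx⟩ := exists_leaf_beyond hT (Ne.symm huw : w ≠ u)
  obtain ⟨y, hy1, hby⟩ := exists_leaf_beyond hT huw
  have hxleaf : IsLeaf G x := hx1
  have hyleaf : IsLeaf G y := hy1
  have hxy : x ≠ y := by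
    intro he
    rw [he] at hbx
    unfold Btwn at hbx hby
    have c1 : G.dist w u = G.dist u w := SimpleGraph.dist_comm
    have c2 : G.dist w y = G.dist y w := SimpleGraph.dist_comm
    have c3 : G.dist u y = G.dist y u := SimpleGraph.dist_comm
    have h0 : G.dist u w = 0 := by omega
    exact huw ((dist_eq_zero_iff hT).mp h0)
  set P : V → Prop := fun v => IsLeaf G v ∧ v ≠ x ∧ v ≠ y with hP
  let c : V → ({v // P v} ⊕ Unit) := fun v => if h : P v then Sum.inl ⟨v, h⟩ else Sum.inr ()
  have hclsL : ∀ (l : V) (h : P l), {z | c z = Sum.inl ⟨l, h⟩} = {l} := by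
    intro l h
    ext z
    simp only [Set.mem_setOf_eq, Set.mem_singleton_iff, c]
    constructor
    · intro hz
      by_cases hPz : P z
      · rw [dif_pos hPz] at hz
        exact congrArg Subtype.val (Sum.inl.inj hz)
      · rw [dif_neg hPz] at hz
        exact absurd hz (by simp)
    · rintro rfl
      rw [dif_pos h]
  have hPx : ¬ P x := by
    intro h
    exact h.2.1 rfl
  have hsurj : Function.Surjective c := by
    rintro (⟨l, hl⟩ | ⟨⟩)
    · exact ⟨l, by simp only [c, dif_pos hl]⟩
    · exact ⟨x, by simp only [c, dif_neg hPx]⟩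
  have hres : ∀ p q : V,
      (∀ i, distSet G p {z | c z = i} = distSet G q {z | c z = i}) → p = q := by
    intro p q hcoords
    have hsing : ∀ l, P l → G.dist p l = G.dist q l := by
      intro l hPl
      have h2 := hcoords (Sum.inl ⟨l, hPl⟩)
      rw [hclsL l hPl] at h2
      rw [distSet_singleton', distSet_singleton'] at h2
      exact h2
    by_cases hPp : P p
    · have := hsing p hPp
      rw [SimpleGraph.dist_self] at this
      exact ((dist_eq_zero_iff hT).mp this.symm).symm
    · by_cases hPq : P q
      · have := hsing q hPq
        rw [show G.dist q q = 0 from SimpleGraph.dist_self] at this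
        exact (dist_eq_zero_iff hT).mp this
      · by_contra hne
        obtain ⟨a, ha1, hba⟩ := exists_leaf_beyond hT hne
        obtain ⟨b, hb1, hbb⟩ := exists_leaf_beyond hT (Ne.symm hne)
        have haleaf : IsLeaf G a := ha1
        have hbleaf : IsLeaf G b := hb1
        have hqp0 : 0 < G.dist p q := dist_pos hT hne
        have hcomm : G.dist p q = G.dist q p := SimpleGraph.dist_comm
        have haxy : a = x ∨ a = y := by
          by_contra hcon
          push_neg at hcon
          have := hsing a ⟨haleaf, hcon.1, hcon.2⟩
          unfold Btwn at hba
          omega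
        have hbxy : b = x ∨ b = y := by
          by_contra hcon
          push_neg at hcon
          have := hsing b ⟨hbleaf, hcon.1, hcon.2⟩
          unfold Btwn at hbb
          omega
        have hab : a ≠ b := by
          intro he
          rw [he] at hba
          unfold Btwn at hba hbb
          have c1 : G.dist q b = G.dist b q := SimpleGraph.dist_comm
          have c2 : G.dist p b = G.dist b p := SimpleGraph.dist_comm
          omega
        rcases haxy with rfl | rfl
        · rcases hbxy with rfl | rfl
          · exact absurd rfl hab
          · exact two_majors_core hT hu hw huw hxleaf hyleaf hbx hby hne hba hbb
              (fun l hl hlx hly => hsing l ⟨hl, hlx, hly⟩)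
        · rcases hbxy with rfl | rfl
          · exact two_majors_core hT hw hu huw.symm hyleaf hxleaf hby hbx hne hba hbb
              (fun l hl hly hlx => hsing l ⟨hl, hlx, hly⟩)
          · exact absurd rfl hab
  -- cardinality
  have hsubset : ({x, y} : Set V) ⊆ {v | IsLeaf G v} := by
    rintro z hz
    rcases hz with rfl | hz
    · exact hxleaf
    · rcases hz with rfl
      exact hyleaf
  have hpair : ({x, y} : Set V).ncard = 2 := Set.ncard_pair hxy
  have hdiff : ({v | IsLeaf G v} \ {x, y}).ncard = numLeaves G - 2 := by
    rw [Set.ncard_diff hsubset (Set.toFinite _), hpair]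
    rfl
  have hsetP : {v | P v} = {v | IsLeaf G v} \ {x, y} := by
    ext v
    simp only [hP, Set.mem_setOf_eq, Set.mem_diff, Set.mem_insert_iff,
      Set.mem_singleton_iff]
    tauto
  have hcardP : Fintype.card {v // P v} = numLeaves G - 2 := by
    have h1 : Nat.card {v // P v} = Fintype.card {v // P v} := Nat.card_eq_fintype_card
    have h2 : Nat.card {v // P v} = ({v | P v}).ncard := Nat.card_coe_set_eq _
    rw [← h1, h2, hsetP, hdiff]
  have hcardI : Fintype.card ({v // P v} ⊕ Unit) = numLeaves G - 1 := by
    rw [Fintype.card_sum, hcardP]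
    simp
    omega
  exact ⟨_, transport_partition c hsurj hres (Fintype.equivFinOfCardEq hcardI)⟩

end CaseTwoMajors

section Spider
open TreeTK
variable {V : Type*} [Fintype V] {G : SimpleGraph V}

/-- pure-arith betweenness chaining -/
lemma btw_concat (hT : G.IsTree) {a b c d : V} (h1 : Btwn G a b c) (h2 : Btwn G a c d) :
    Btwn G a b d ∧ Btwn G b c d := by
  unfold Btwn at *
  have t1 := dist_triangle hT a b d
  have t2 := dist_triangle hT b c d
  constructor <;> omega

/-- an interior vertex of a geodesic has two distinct neighbors -/
lemma interior_two_neighbors (hT : G.IsTree) {a v b : V} (hb : Btwn G a v b)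
    (hva : v ≠ a) (hvb : v ≠ b) : 2 ≤ (G.neighborSet v).ncard := by
  obtain ⟨n1, hn1adj, hn1d, hn1b⟩ := exists_parent hT (Ne.symm hva)
  obtain ⟨n2, hn2adj, hn2d, hn2b⟩ := exists_parent hT (Ne.symm hvb)
  have hn12 : n1 ≠ n2 := by
    intro he
    rw [he] at hn1d
    have hv2 : G.dist v n2 = 1 := dist_eq_one_iff_adj.mpr hn2adj.symm
    have t1 := dist_triangle hT a v n2
    have t2 := dist_triangle hT a n2 b
    have c1 : G.dist b n2 = G.dist n2 b := SimpleGraph.dist_comm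
    have c2 : G.dist b v = G.dist v b := SimpleGraph.dist_comm
    unfold Btwn at hb hn2b
    omega
  have hsub : ({n1, n2} : Set V) ⊆ G.neighborSet v := by
    rintro z (rfl | rfl)
    · exact hn1adj.symm
    · exact hn2adj.symm
  have := Set.ncard_le_ncard hsub (Set.toFinite _)
  rw [Set.ncard_pair hn12] at this
  exact this

/-- in a spider, the leaf beyond a vertex is unique -/
lemma spider_phi_unique (hT : G.IsTree) {c₀ : V}
    (honly : ∀ v, 3 ≤ (G.neighborSet v).ncard → v = c₀) :
    ∀ v l1 l2 : V, v ≠ c₀ → IsLeaf G l1 → IsLeaf G l2 →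
      Btwn G c₀ v l1 → Btwn G c₀ v l2 → l1 = l2 := by
  suffices key : ∀ (n : ℕ) (v l1 l2 : V), G.dist v l1 ≤ n → v ≠ c₀ → IsLeaf G l1 → IsLeaf G l2 →
      Btwn G c₀ v l1 → Btwn G c₀ v l2 → l1 = l2 by
    intro v l1 l2
    exact key (G.dist v l1) v l1 l2 le_rfl
  intro n
  induction n with
  | zero =>
    intro v l1 l2 hn hvc hl1 hl2 hb1 hb2
    have h0 : G.dist v l1 = 0 := by omega
    have hveq : v = l1 := (dist_eq_zero_iff hT).mp h0
    subst hveq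
    by_contra hne
    have h2 := interior_two_neighbors hT hb2 hvc hne
    unfold IsLeaf at hl1
    omega
  | succ n ih =>
    intro v l1 l2 hn hvc hl1 hl2 hb1 hb2
    rcases Classical.em (v = l1) with rfl | hvl1
    · by_contra hne
      have h2 := interior_two_neighbors hT hb2 hvc hne
      unfold IsLeaf at hl1
      omega
    rcases Classical.em (v = l2) with rfl | hvl2
    · by_contra hne
      have h2 := interior_two_neighbors hT hb1 hvc (Ne.symm hne)
      unfold IsLeaf at hl2
      omega
    -- v is distinct from c₀, l1, l2
    obtain ⟨n0, hn0adj, hn0d, hn0b⟩ := exists_parent hT (Ne.symm hvc)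
    obtain ⟨z1, hz1adj, hz1d, hz1b⟩ := exists_parent hT (Ne.symm hvl1)
    obtain ⟨z2, hz2adj, hz2d, hz2b⟩ := exists_parent hT (Ne.symm hvl2)
    have hvz1 : G.dist v z1 = 1 := dist_eq_one_iff_adj.mpr hz1adj.symm
    have hvz2 : G.dist v z2 = 1 := dist_eq_one_iff_adj.mpr hz2adj.symm
    have hcz1 : G.dist c₀ z1 = G.dist c₀ v + 1 := by
      have t1 := dist_triangle hT c₀ v z1
      have t2 := dist_triangle hT c₀ l1 z1
      unfold Btwn at hb1 hz1b
      have c1 : G.dist l1 z1 = G.dist z1 l1 := SimpleGraph.dist_comm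
      have c2 : G.dist l1 v = G.dist v l1 := SimpleGraph.dist_comm
      have c3 : G.dist c₀ l1 ≤ G.dist c₀ z1 + G.dist z1 l1 := dist_triangle hT c₀ z1 l1
      omega
    have hcz2 : G.dist c₀ z2 = G.dist c₀ v + 1 := by
      have t1 := dist_triangle hT c₀ v z2
      unfold Btwn at hb2 hz2b
      have c1 : G.dist l2 z2 = G.dist z2 l2 := SimpleGraph.dist_comm
      have c2 : G.dist l2 v = G.dist v l2 := SimpleGraph.dist_comm
      have c3 : G.dist c₀ l2 ≤ G.dist c₀ z2 + G.dist z2 l2 := dist_triangle hT c₀ z2 l2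
      omega
    have hz1n0 : z1 ≠ n0 := by
      intro he
      rw [he] at hcz1
      omega
    have hz2n0 : z2 ≠ n0 := by
      intro he
      rw [he] at hcz2
      omega
    have hz12 : z1 = z2 := by
      by_contra hne
      have hsub : ({n0, z1, z2} : Set V) ⊆ G.neighborSet v := by
        rintro z (rfl | rfl | rfl)
        · exact hn0adj.symm
        · exact hz1adj.symm
        · exact hz2adj.symm
      have hcard : ({n0, z1, z2} : Set V).ncard = 3 := by
        rw [Set.ncard_insert_of_notMem (by simp [Ne.symm hz1n0, Ne.symm hz2n0])
          (Set.toFinite _), Set.ncard_pair hne]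
      have h3 := Set.ncard_le_ncard hsub (Set.toFinite _)
      rw [hcard] at h3
      exact hvl1 (by rw [honly v h3] at hvc ⊢ <;> exact absurd rfl hvc)
    subst hz12
    have hz1c : z1 ≠ c₀ := by
      intro he
      rw [he] at hcz1
      have := dist_pos hT (Ne.symm hvc)
      rw [SimpleGraph.dist_self] at hcz1
      omega
    have hbz1 : Btwn G c₀ z1 l1 := by
      unfold Btwn at hb1 hz1b ⊢
      have c1 : G.dist l1 z1 = G.dist z1 l1 := SimpleGraph.dist_comm
      have c2 : G.dist l1 v = G.dist v l1 := SimpleGraph.dist_comm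
      have t2 := dist_triangle hT c₀ z1 l1
      omega
    have hbz2 : Btwn G c₀ z1 l2 := by
      unfold Btwn at hb2 hz2b ⊢
      have c1 : G.dist l2 z1 = G.dist z1 l2 := SimpleGraph.dist_comm
      have c2 : G.dist l2 v = G.dist v l2 := SimpleGraph.dist_comm
      have t2 := dist_triangle hT c₀ z1 l2
      omega
    have hd : G.dist z1 l1 ≤ n := by
      unfold Btwn at hz1b
      have c1 : G.dist l1 z1 = G.dist z1 l1 := SimpleGraph.dist_comm
      have c2 : G.dist l1 v = G.dist v l1 := SimpleGraph.dist_comm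
      omega
    exact ih z1 l1 l2 hd hz1c hl1 hl2 hbz1 hbz2


lemma exists_partition_spider (hT : G.IsTree) (hl4 : 4 ≤ numLeaves G) (hs : ¬ IsStar G)
    {c₀ : V} (hc3 : 3 ≤ (G.neighborSet c₀).ncard)
    (honly : ∀ v, 3 ≤ (G.neighborSet v).ncard → v = c₀) :
    ∃ c : V → Fin (numLeaves G - 1), IsResolvingPartition G c := by
  classical
  have hex : ∀ v : V, ∃ l, v ≠ c₀ → (IsLeaf G l ∧ Btwn G c₀ v l) := by
    intro v
    by_cases h : v = c₀
    · exact ⟨c₀, fun h' => absurd h h'⟩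
    · obtain ⟨l, hl, hb⟩ := exists_leaf_beyond hT (Ne.symm h : c₀ ≠ v)
      exact ⟨l, fun _ => ⟨hl, hb⟩⟩
  choose lf hlf using hex
  set dep : V → ℕ := fun v => G.dist c₀ v with hdepdef
  have hlf_leaf : ∀ v, v ≠ c₀ → IsLeaf G (lf v) := fun v h => (hlf v h).1
  have hlf_btw : ∀ v, v ≠ c₀ → Btwn G c₀ v (lf v) := fun v h => (hlf v h).2
  have hleaf_ne : ∀ l, IsLeaf G l → l ≠ c₀ := by
    intro l hl he
    unfold IsLeaf at hl
    rw [he] at hl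
    omega
  have huniq := spider_phi_unique hT honly
  have hlf_id : ∀ l, IsLeaf G l → lf l = l := by
    intro l hl
    have hlc := hleaf_ne l hl
    exact huniq l (lf l) l hlc (hlf_leaf l hlc) hl (hlf_btw l hlc) (btw_right c₀ l)
  have hdep_pos : ∀ v, v ≠ c₀ → 1 ≤ dep v := by
    intro v h
    exact dist_pos hT (Ne.symm h)
  have hdep_le : ∀ v, v ≠ c₀ → dep v ≤ dep (lf v) := by
    intro v h
    have := hlf_btw v h
    unfold Btwn at this
    simp only [hdepdef]
    omega
  have hdist_c₀ : ∀ v, G.dist v c₀ = dep v := by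
    intro v
    simp only [hdepdef]
    exact SimpleGraph.dist_comm
  have hsame_btw : ∀ u v, u ≠ c₀ → v ≠ c₀ → lf u = lf v → dep u ≤ dep v →
      Btwn G c₀ u v := by
    intro u v hu hv hlfe hle
    have h2 := hlf_btw v hv
    rw [← hlfe] at h2
    exact btw_of_btw_le hT (hlf_btw u hu) h2 hle
  have hsame_dist : ∀ u v, u ≠ c₀ → v ≠ c₀ → lf u = lf v → dep u ≤ dep v →
      G.dist u v = dep v - dep u := by
    intro u v hu hv hlfe hle
    have := hsame_btw u v hu hv hlfe hle
    unfold Btwn at this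
    simp only [hdepdef] at *
    omega
  have hsame_eq : ∀ u v, u ≠ c₀ → v ≠ c₀ → lf u = lf v → dep u = dep v → u = v := by
    intro u v hu hv hlfe hde
    have h2 := hlf_btw v hv
    rw [← hlfe] at h2
    exact btw_unique hT (hlf_btw u hu) h2 hde
  have hstep : ∀ z z', G.Adj z z' → z ≠ c₀ → z' ≠ c₀ → lf z = lf z' := by
    intro z z' hadj hz hz'
    have hzz' : G.dist z z' = 1 := dist_eq_one_iff_adj.mpr hadj
    rcases adj_dist_cases hT hadj c₀ with hc | hc
    · have hb : Btwn G c₀ z z' := by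
        unfold Btwn
        omega
      have := (btw_concat hT hb (hlf_btw z' hz')).1
      exact huniq z (lf z) (lf z') hz (hlf_leaf z hz) (hlf_leaf z' hz')
        (hlf_btw z hz) this
    · have hb : Btwn G c₀ z' z := by
        unfold Btwn
        have c1 : G.dist z' z = G.dist z z' := SimpleGraph.dist_comm
        omega
      have := (btw_concat hT hb (hlf_btw z hz)).1
      exact (huniq z' (lf z') (lf z) hz' (hlf_leaf z' hz') (hlf_leaf z hz)
        (hlf_btw z' hz') this).symm
  have hwalk : ∀ (a b : V) (w : G.Walk a b), (∀ z ∈ w.support, z ≠ c₀) → lf a = lf b := by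
    intro a b w
    induction w with
    | nil => intro _; rfl
    | @cons a' m b' h w ih =>
      intro hz
      have ha' : a' ≠ c₀ := hz _ (Walk.start_mem_support _)
      have hm : m ≠ c₀ := by
        apply hz
        rw [Walk.support_cons]
        exact List.mem_cons_of_mem _ (Walk.start_mem_support _)
      have h1 := hstep a' m h ha' hm
      rw [h1]
      apply ih
      intro z hzz
      apply hz
      rw [Walk.support_cons]
      exact List.mem_cons_of_mem _ hzz
  have hcross : ∀ u v, u ≠ c₀ → v ≠ c₀ → lf u ≠ lf v → G.dist u v = dep u + dep v := by
    intro u v hu hv hne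
    obtain ⟨p, hp, hpl⟩ := exists_geodesic hT u v
    have hc₀mem : c₀ ∈ p.support := by
      by_contra hmem
      exact hne (hwalk u v p (fun z hz he => hmem (he ▸ hz)))
    have hb := btw_of_mem_support hT p hp hc₀mem
    unfold Btwn at hb
    simp only [hdepdef]
    have c1 : G.dist u c₀ = G.dist c₀ u := SimpleGraph.dist_comm
    omega
  have hdepth : ∀ (l : V), IsLeaf G l → ∀ (k j : ℕ), j + k = dep l → 1 ≤ j →
      ∃ v, v ≠ c₀ ∧ lf v = l ∧ dep v = j := by
    intro l hl k
    induction k with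
    | zero =>
      intro j hj h1
      exact ⟨l, hleaf_ne l hl, hlf_id l hl, by omega⟩
    | succ k ih =>
      intro j hj h1
      obtain ⟨v, hv, hlv, hdv⟩ := ih (j + 1) (by omega) (by omega)
      obtain ⟨n0, hn0adj, hn0d, hn0b⟩ := exists_parent hT (Ne.symm hv)
      have hdn0 : dep n0 = j := by
        simp only [hdepdef] at *
        omega
      have hn0c : n0 ≠ c₀ := by
        intro he
        rw [he] at hdn0
        simp only [hdepdef, SimpleGraph.dist_self] at hdn0
        omega
      have hb2 : Btwn G c₀ n0 l := by
        have := hlf_btw v hv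
        rw [hlv] at this
        exact (btw_concat hT hn0b this).1
      have hlfn0 : lf n0 = l :=
        huniq n0 (lf n0) l hn0c (hlf_leaf _ hn0c) hl (hlf_btw _ hn0c) hb2
      exact ⟨n0, hn0c, hlfn0, hdn0⟩
  -- a leaf at depth ≥ 2 exists since G is not a star
  obtain ⟨ls, hlsleaf, hls2⟩ : ∃ l, IsLeaf G l ∧ 2 ≤ dep l := by
    by_contra hcon
    push_neg at hcon
    apply hs
    have hkey : ∀ v, v ≠ c₀ → G.Adj c₀ v ∧ IsLeaf G v := by
      intro v hv
      have h1 := hdep_pos v hv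
      have h2 := hdep_le v hv
      have h3 := hcon (lf v) (hlf_leaf v hv)
      have hd1 : dep v = 1 := by omega
      have hd2 : dep (lf v) = 1 := by omega
      have hb := hlf_btw v hv
      unfold Btwn at hb
      simp only [hdepdef] at hd1 hd2
      have hveq : v = lf v := by
        have h0 : G.dist v (lf v) = 0 := by omega
        exact (dist_eq_zero_iff hT).mp h0
      constructor
      · exact dist_eq_one_iff_adj.mp hd1
      · rw [hveq]
        exact hlf_leaf v hv
    exact ⟨c₀, fun v hv => (hkey v hv).1, fun v hv => (hkey v hv).2⟩
  have hlsc : ls ≠ c₀ := hleaf_ne ls hlsleaf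
  -- two other distinct leaves
  obtain ⟨lA, hlA, lB, hlB, hABne⟩ :
      ∃ a ∈ {v | IsLeaf G v} \ {ls}, ∃ b ∈ {v | IsLeaf G v} \ {ls}, a ≠ b := by
    apply exists_pair
    have hsub : ({ls} : Set V) ⊆ {v | IsLeaf G v} := by
      rintro z rfl
      exact hlsleaf
    have := Set.ncard_diff hsub (Set.toFinite _)
    rw [Set.ncard_singleton] at this
    have hn : {v | IsLeaf G v}.ncard = numLeaves G := rfl
    omega
  have hlAleaf : IsLeaf G lA := hlA.1
  have hlBleaf : IsLeaf G lB := hlB.1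
  have hlAs : lA ≠ ls := hlA.2
  have hlBs : lB ≠ ls := hlB.2
  have hlAc : lA ≠ c₀ := hleaf_ne lA hlAleaf
  have hlBc : lB ≠ c₀ := hleaf_ne lB hlBleaf
  have hls2' : 2 ≤ dep ls := hls2
  set P' : V → Prop := fun v => IsLeaf G v ∧ v ≠ ls ∧ v ≠ lA ∧ v ≠ lB with hP'def
  set cc : V → ({v // P' v} ⊕ Fin 2) := fun v =>
    if hv : v = c₀ then Sum.inr 0
    else if h1 : lf v = ls then (if Odd (dep v) then Sum.inr 0 else Sum.inr 1)
    else if h2 : lf v = lA then Sum.inr 0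
    else if h3 : lf v = lB then Sum.inr 1
    else Sum.inl ⟨lf v, ⟨hlf_leaf v hv, h1, h2, h3⟩⟩
    with hccdef
  have hmk0 : cc c₀ = Sum.inr 0 := by
    simp [hccdef]
  have hmkSodd : ∀ z, z ≠ c₀ → lf z = ls → Odd (dep z) → cc z = Sum.inr 0 := by
    intro z h1 h2 h3
    simp only [hccdef]
    rw [dif_neg h1, dif_pos h2, if_pos h3]
  have hmkSeven : ∀ z, z ≠ c₀ → lf z = ls → ¬ Odd (dep z) → cc z = Sum.inr 1 := by
    intro z h1 h2 h3
    simp only [hccdef]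
    rw [dif_neg h1, dif_pos h2, if_neg h3]
  have hmkA : ∀ z, z ≠ c₀ → lf z = lA → cc z = Sum.inr 0 := by
    intro z h1 h2
    simp only [hccdef]
    rw [dif_neg h1, dif_neg (by rw [h2]; exact hlAs), dif_pos h2]
  have hmkB : ∀ z, z ≠ c₀ → lf z = lB → cc z = Sum.inr 1 := by
    intro z h1 h2
    simp only [hccdef]
    rw [dif_neg h1, dif_neg (by rw [h2]; exact hlBs),
      dif_neg (by rw [h2]; exact hABne.symm), dif_pos h2]
  have hmkC : ∀ z, z ≠ c₀ → ∀ (l : V) (hl : P' l), lf z = l → cc z = Sum.inl ⟨l, hl⟩ := by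
    intro z h1 l hl h2
    have hl' := hl
    rw [hP'def] at hl'
    simp only [hccdef]
    rw [dif_neg h1, dif_neg (by rw [h2]; exact hl'.2.1),
      dif_neg (by rw [h2]; exact hl'.2.2.1), dif_neg (by rw [h2]; exact hl'.2.2.2)]
    exact congrArg Sum.inl (Subtype.ext h2)
  have hinv : ∀ z, (z = c₀ ∧ cc z = Sum.inr 0) ∨
      (z ≠ c₀ ∧ lf z = ls ∧ Odd (dep z) ∧ cc z = Sum.inr 0) ∨
      (z ≠ c₀ ∧ lf z = ls ∧ ¬ Odd (dep z) ∧ cc z = Sum.inr 1) ∨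
      (z ≠ c₀ ∧ lf z ≠ ls ∧ lf z = lA ∧ cc z = Sum.inr 0) ∨
      (z ≠ c₀ ∧ lf z ≠ ls ∧ lf z = lB ∧ cc z = Sum.inr 1) ∨
      (z ≠ c₀ ∧ ∃ hz : P' (lf z), cc z = Sum.inl ⟨lf z, hz⟩) := by
    intro z
    by_cases h1 : z = c₀
    · exact Or.inl ⟨h1, by rw [h1]; exact hmk0⟩
    by_cases h2 : lf z = ls
    · by_cases h3 : Odd (dep z)
      · exact Or.inr (Or.inl ⟨h1, h2, h3, hmkSodd z h1 h2 h3⟩)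
      · exact Or.inr (Or.inr (Or.inl ⟨h1, h2, h3, hmkSeven z h1 h2 h3⟩))
    by_cases h4 : lf z = lA
    · exact Or.inr (Or.inr (Or.inr (Or.inl ⟨h1, h2, h4, hmkA z h1 h4⟩)))
    by_cases h5 : lf z = lB
    · exact Or.inr (Or.inr (Or.inr (Or.inr (Or.inl ⟨h1, h2, h5, hmkB z h1 h5⟩))))
    · have hPlf : P' (lf z) := ⟨hlf_leaf z h1, by rw [hP'def] at *; exact h2,
        by rw [hP'def] at *; exact h4, by rw [hP'def] at *; exact h5⟩
      exact Or.inr (Or.inr (Or.inr (Or.inr (Or.inr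
        ⟨h1, hPlf, hmkC z h1 (lf z) hPlf rfl⟩))))
  -- a depth-1 vertex on a given leaf's leg
  have hfirst : ∀ l : V, IsLeaf G l → ∃ u, u ≠ c₀ ∧ lf u = l ∧ dep u = 1 := by
    intro l hl
    have h1 : 1 ≤ dep l := hdep_pos l (hleaf_ne l hl)
    exact hdepth l hl (dep l - 1) 1 (by omega) le_rfl
  -- coordinate value lemmas
  have hvalA1 : ∀ v, v ≠ c₀ → lf v ≠ ls → lf v ≠ lA →
      distSet G v {z | cc z = Sum.inr 0} = dep v := by
    intro v h1 h2 h3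
    apply distSet_eq'
    · intro s hs
      simp only [Set.mem_setOf_eq] at hs
      rcases hinv s with ⟨hc, hv0⟩ | ⟨hc, hlfs, hod, hv0⟩ | ⟨hc, hlfs, hod, hv1⟩ |
        ⟨hc, hns, hlfs, hv0⟩ | ⟨hc, hns, hlfs, hv1⟩ | ⟨hc, hPl, hv0⟩
      · rw [hc, hdist_c₀ v]
      · rw [hcross v s h1 hc (by rw [hlfs]; exact h2)]
        have := hdep_pos s hc
        omega
      · rw [hs] at hv1
        exact absurd hv1 (by simp)
      · rw [hcross v s h1 hc (by rw [hlfs]; exact h3)]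
        have := hdep_pos s hc
        omega
      · rw [hs] at hv1
        exact absurd hv1 (by simp)
      · rw [hs] at hv0
        exact absurd hv0 (by simp)
    · exact ⟨c₀, hmk0, hdist_c₀ v⟩
  have hvalA2 : ∀ v, v ≠ c₀ → lf v = ls → ¬ Odd (dep v) →
      distSet G v {z | cc z = Sum.inr 0} = 1 := by
    intro v h1 h2 h3
    have hdv2 : 2 ≤ dep v := by
      have := hdep_pos v h1
      rcases Nat.even_or_odd (dep v) with he | ho
      · rcases he with ⟨k, hk⟩
        omega
      · exact absurd ho h3
    apply distSet_eq'
    · intro s hs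
      simp only [Set.mem_setOf_eq] at hs
      have hvs : v ≠ s := by
        rcases hinv s with ⟨hc, hv0⟩ | ⟨hc, hlfs, hod, hv0⟩ | ⟨hc, hlfs, hod, hv1⟩ |
          ⟨hc, hns, hlfs, hv0⟩ | ⟨hc, hns, hlfs, hv1⟩ | ⟨hc, hPl, hv0⟩
        · rw [hc]; exact h1
        · intro he; rw [← he] at hod; exact h3 hod
        · rw [hs] at hv1; exact absurd hv1 (by simp)
        · intro he; rw [← he, h2] at hlfs; exact hlAs hlfs.symm
        · rw [hs] at hv1; exact absurd hv1 (by simp)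
        · rw [hs] at hv0; exact absurd hv0 (by simp)
      exact dist_pos hT hvs
    · have hdle : dep v ≤ dep ls := by
        have := hdep_le v h1
        rw [h2] at this
        exact this
      obtain ⟨u, huc, hulf, hud⟩ := hdepth ls hlsleaf (dep ls - (dep v - 1)) (dep v - 1)
        (by omega) (by omega)
      have hodd : Odd (dep u) := by
        have h3' : ¬ dep v % 2 = 1 := fun hh => h3 (Nat.odd_iff.mpr hh)
        rw [Nat.odd_iff, hud]
        omega
      refine ⟨u, hmkSodd u huc hulf hodd, ?_⟩
      have := hsame_dist u v huc h1 (by rw [hulf, h2]) (by omega)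
      have hc : G.dist v u = G.dist u v := SimpleGraph.dist_comm
      omega
  have hvalBc₀ : distSet G c₀ {z | cc z = Sum.inr 1} = 1 := by
    apply distSet_eq'
    · intro s hs
      simp only [Set.mem_setOf_eq] at hs
      rcases hinv s with ⟨hc, hv0⟩ | ⟨hc, hlfs, hod, hv0⟩ | ⟨hc, hlfs, hod, hv1⟩ |
        ⟨hc, hns, hlfs, hv0⟩ | ⟨hc, hns, hlfs, hv1⟩ | ⟨hc, hPl, hv0⟩
      · rw [hs] at hv0; exact absurd hv0 (by simp)
      · rw [hs] at hv0; exact absurd hv0 (by simp)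
      · exact dist_pos hT (Ne.symm hc)
      · rw [hs] at hv0; exact absurd hv0 (by simp)
      · exact dist_pos hT (Ne.symm hc)
      · rw [hs] at hv0; exact absurd hv0 (by simp)
    · obtain ⟨u, huc, hulf, hud⟩ := hfirst lB hlBleaf
      exact ⟨u, hmkB u huc hulf, hud⟩
  have hvalB1 : ∀ v, v ≠ c₀ → lf v ≠ ls → lf v ≠ lB →
      distSet G v {z | cc z = Sum.inr 1} = dep v + 1 := by
    intro v h1 h2 h3
    apply distSet_eq'
    · intro s hs
      simp only [Set.mem_setOf_eq] at hs
      rcases hinv s with ⟨hc, hv0⟩ | ⟨hc, hlfs, hod, hv0⟩ | ⟨hc, hlfs, hod, hv1⟩ |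
        ⟨hc, hns, hlfs, hv0⟩ | ⟨hc, hns, hlfs, hv1⟩ | ⟨hc, hPl, hv0⟩
      · rw [hs] at hv0; exact absurd hv0 (by simp)
      · rw [hs] at hv0; exact absurd hv0 (by simp)
      · rw [hcross v s h1 hc (by rw [hlfs]; exact h2)]
        have := hdep_pos s hc
        omega
      · rw [hs] at hv0; exact absurd hv0 (by simp)
      · rw [hcross v s h1 hc (by rw [hlfs]; exact h3)]
        have := hdep_pos s hc
        omega
      · rw [hs] at hv0; exact absurd hv0 (by simp)
    · obtain ⟨u, huc, hulf, hud⟩ := hfirst lB hlBleaf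
      refine ⟨u, hmkB u huc hulf, ?_⟩
      rw [hcross v u h1 huc (by rw [hulf]; exact h3)]
      omega
  have hvalB2 : ∀ v, v ≠ c₀ → lf v = ls → Odd (dep v) →
      distSet G v {z | cc z = Sum.inr 1} = 1 := by
    intro v h1 h2 h3
    apply distSet_eq'
    · intro s hs
      simp only [Set.mem_setOf_eq] at hs
      have hvs : v ≠ s := by
        rcases hinv s with ⟨hc, hv0⟩ | ⟨hc, hlfs, hod, hv0⟩ | ⟨hc, hlfs, hod, hv1⟩ |
          ⟨hc, hns, hlfs, hv0⟩ | ⟨hc, hns, hlfs, hv1⟩ | ⟨hc, hPl, hv0⟩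
        · rw [hs] at hv0; exact absurd hv0 (by simp)
        · rw [hs] at hv0; exact absurd hv0 (by simp)
        · intro he; rw [← he] at hod; exact hod h3
        · rw [hs] at hv0; exact absurd hv0 (by simp)
        · intro he; rw [← he, h2] at hlfs; exact hlBs hlfs.symm
        · rw [hs] at hv0; exact absurd hv0 (by simp)
      exact dist_pos hT hvs
    · have hdle : dep v ≤ dep ls := by
        have := hdep_le v h1
        rw [h2] at this
        exact this
      by_cases hlt : dep v < dep ls
      · obtain ⟨u, huc, hulf, hud⟩ := hdepth ls hlsleaf (dep ls - (dep v + 1)) (dep v + 1)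
          (by omega) (by omega)
        have hnodd : ¬ Odd (dep u) := by
          have h3' : dep v % 2 = 1 := Nat.odd_iff.mp h3
          rw [Nat.odd_iff, hud]
          omega
        refine ⟨u, hmkSeven u huc hulf hnodd, ?_⟩
        have := hsame_dist v u h1 huc (by rw [hulf, h2]) (by omega)
        omega
      · have hdeq : dep v = dep ls := by omega
        have hd3 : 2 ≤ dep v := by omega
        obtain ⟨u, huc, hulf, hud⟩ := hdepth ls hlsleaf (dep ls - (dep v - 1)) (dep v - 1)
          (by omega) (by omega)
        have hnodd : ¬ Odd (dep u) := by
          have h3' : dep v % 2 = 1 := Nat.odd_iff.mp h3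
          rw [Nat.odd_iff, hud]
          omega
        refine ⟨u, hmkSeven u huc hulf hnodd, ?_⟩
        have := hsame_dist u v huc h1 (by rw [hulf, h2]) (by omega)
        have hc : G.dist v u = G.dist u v := SimpleGraph.dist_comm
        omega
  have hvalCc₀ : ∀ (l : V) (hl : P' l),
      distSet G c₀ {z | cc z = Sum.inl ⟨l, hl⟩} = 1 := by
    intro l hl
    apply distSet_eq'
    · intro s hs
      simp only [Set.mem_setOf_eq] at hs
      rcases hinv s with ⟨hc, hv0⟩ | ⟨hc, hlfs, hod, hv0⟩ | ⟨hc, hlfs, hod, hv1⟩ |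
        ⟨hc, hns, hlfs, hv0⟩ | ⟨hc, hns, hlfs, hv1⟩ | ⟨hc, hPl, hv0⟩
      · rw [hs] at hv0; exact absurd hv0 (by simp)
      · rw [hs] at hv0; exact absurd hv0 (by simp)
      · rw [hs] at hv1; exact absurd hv1 (by simp)
      · rw [hs] at hv0; exact absurd hv0 (by simp)
      · rw [hs] at hv1; exact absurd hv1 (by simp)
      · exact dist_pos hT (Ne.symm hc)
    · obtain ⟨u, huc, hulf, hud⟩ := hfirst l hl.1
      exact ⟨u, hmkC u huc l hl hulf, hud⟩
  have hvalC1 : ∀ (l : V) (hl : P' l) v, v ≠ c₀ → lf v ≠ l →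
      distSet G v {z | cc z = Sum.inl ⟨l, hl⟩} = dep v + 1 := by
    intro l hl v h1 h2
    apply distSet_eq'
    · intro s hs
      simp only [Set.mem_setOf_eq] at hs
      rcases hinv s with ⟨hc, hv0⟩ | ⟨hc, hlfs, hod, hv0⟩ | ⟨hc, hlfs, hod, hv1⟩ |
        ⟨hc, hns, hlfs, hv0⟩ | ⟨hc, hns, hlfs, hv1⟩ | ⟨hc, hPl, hv0⟩
      · rw [hs] at hv0; exact absurd hv0 (by simp)
      · rw [hs] at hv0; exact absurd hv0 (by simp)
      · rw [hs] at hv1; exact absurd hv1 (by simp)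
      · rw [hs] at hv0; exact absurd hv0 (by simp)
      · rw [hs] at hv1; exact absurd hv1 (by simp)
      · rw [hs] at hv0
        have hlfsl : lf s = l := by
          have := Sum.inl.inj hv0
          exact congrArg Subtype.val this.symm
        rw [hcross v s h1 hc (by rw [hlfsl]; exact h2)]
        have := hdep_pos s hc
        omega
    · obtain ⟨u, huc, hulf, hud⟩ := hfirst l hl.1
      refine ⟨u, hmkC u huc l hl hulf, ?_⟩
      rw [hcross v u h1 huc (by rw [hulf]; exact h2)]
      omega
  -- some leaf in P'
  obtain ⟨l0, hl0⟩ : ∃ l, P' l := by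
    have hsub : ({ls, lA, lB} : Set V) ⊆ {v | IsLeaf G v} := by
      rintro z (rfl | rfl | rfl)
      · exact hlsleaf
      · exact hlAleaf
      · exact hlBleaf
    have htc : ({ls, lA, lB} : Set V).ncard ≤ 3 := by
      have h1 := Set.ncard_insert_le ls ({lA, lB} : Set V)
      have h2 := Set.ncard_insert_le lA ({lB} : Set V)
      rw [Set.ncard_singleton] at h2
      omega
    have hd := Set.ncard_diff hsub (Set.toFinite _)
    have hne : ({v | IsLeaf G v} \ {ls, lA, lB}).Nonempty := by
      rw [← Set.ncard_pos (Set.toFinite _)]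
      have hn : {v | IsLeaf G v}.ncard = numLeaves G := rfl
      omega
    obtain ⟨l, hlmem⟩ := hne
    refine ⟨l, hlmem.1, ?_, ?_, ?_⟩ <;>
      · intro he
        exact hlmem.2 (by rw [he]; simp)
  have hl0s : l0 ≠ ls := hl0.2.1
  have hl0A : l0 ≠ lA := hl0.2.2.1
  have hl0B : l0 ≠ lB := hl0.2.2.2
  have hzero : ∀ (v : V) i, cc v = i → distSet G v {z | cc z = i} = 0 := by
    intro v i hv
    exact distSet_zero_of_mem' hv
  have heven2 : ∀ v, v ≠ c₀ → ¬ Odd (dep v) → 2 ≤ dep v := by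
    intro v h1 h2
    have := hdep_pos v h1
    rcases Nat.even_or_odd (dep v) with ⟨k, hk⟩ | ho
    · omega
    · exact absurd ho h2
  -- the key coordinate-based resolving argument
  have hc0ne : ∀ a, a ≠ c₀ →
      (∀ i, distSet G c₀ {z | cc z = i} = distSet G a {z | cc z = i}) → False := by
    intro a ha hco
    rcases hinv a with ⟨hc, _⟩ | ⟨hc, hlfa, hod, hv0⟩ | ⟨hc, hlfa, hod, hv1⟩ |
      ⟨hc, hns, hlfa, hv0⟩ | ⟨hc, hns, hlfa, hv1⟩ | ⟨hc, hPl, hv0⟩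
    · exact ha hc
    · have h1 := hco (Sum.inl ⟨l0, hl0⟩)
      rw [hvalCc₀ l0 hl0, hvalC1 l0 hl0 a hc (by rw [hlfa]; exact Ne.symm hl0s)] at h1
      have := hdep_pos a hc
      omega
    · have h1 := hco (Sum.inr 0)
      rw [hzero c₀ _ hmk0, hvalA2 a hc hlfa hod] at h1
      omega
    · have h1 := hco (Sum.inr 1)
      rw [hvalBc₀, hvalB1 a hc hns (by rw [hlfa]; exact hABne)] at h1
      have := hdep_pos a hc
      omega
    · have h1 := hco (Sum.inr 0)
      rw [hzero c₀ _ hmk0, hvalA1 a hc hns (by rw [hlfa]; exact hABne.symm)] at h1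
      have := hdep_pos a hc
      omega
    · have h1 := hco (Sum.inl ⟨lf a, hPl⟩)
      rw [hvalCc₀ (lf a) hPl, hzero a _ hv0] at h1
      omega
  have hres : ∀ p q : V,
      (∀ i, distSet G p {z | cc z = i} = distSet G q {z | cc z = i}) → p = q := by
    intro p q hco
    by_cases hp : p = c₀
    · by_cases hq : q = c₀
      · rw [hp, hq]
      · exact absurd (hp ▸ hco) (fun h => hc0ne q hq h)
    · by_cases hq : q = c₀
      · exact absurd (hq ▸ fun i => (hco i).symm) (fun h => hc0ne p hp h)
      · -- both differ from the center
        rcases hinv p with ⟨hcp0, _⟩ | ⟨hcp, hlfp, hodp, hv0p⟩ | ⟨hcp, hlfp, hodp, hv1p⟩ |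
          ⟨hcp, hnsp, hlfp, hv0p⟩ | ⟨hcp, hnsp, hlfp, hv1p⟩ | ⟨hcp, hPlp, hv0p⟩
        · exact absurd hcp0 hp
        all_goals
          rcases hinv q with ⟨hcq0, _⟩ | ⟨hcq, hlfq, hodq, hv0q⟩ | ⟨hcq, hlfq, hodq, hv1q⟩ |
            ⟨hcq, hnsq, hlfq, hv0q⟩ | ⟨hcq, hnsq, hlfq, hv1q⟩ | ⟨hcq, hPlq, hv0q⟩
        -- p : type Sodd
        · exact absurd hcq0 hq
        · have h1 := hco (Sum.inl ⟨l0, hl0⟩)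
          rw [hvalC1 l0 hl0 p hcp (by rw [hlfp]; exact Ne.symm hl0s),
            hvalC1 l0 hl0 q hcq (by rw [hlfq]; exact Ne.symm hl0s)] at h1
          exact hsame_eq p q hcp hcq (hlfp.trans hlfq.symm) (by omega)
        · exfalso
          have h1 := hco (Sum.inr 0)
          rw [hzero p _ hv0p, hvalA2 q hcq hlfq hodq] at h1
          omega
        · exfalso
          have h1 := hco (Sum.inr 1)
          rw [hvalB2 p hcp hlfp hodp, hvalB1 q hcq hnsq (by rw [hlfq]; exact hABne)] at h1
          have := hdep_pos q hcq
          omega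
        · exfalso
          have h1 := hco (Sum.inr 0)
          rw [hzero p _ hv0p,
            hvalA1 q hcq hnsq (by rw [hlfq]; exact hABne.symm)] at h1
          have := hdep_pos q hcq
          omega
        · exfalso
          have h1 := hco (Sum.inr 0)
          rw [hzero p _ hv0p, hvalA1 q hcq hPlq.2.1 hPlq.2.2.1] at h1
          have := hdep_pos q hcq
          omega
        -- p : type Seven
        · exact absurd hcq0 hq
        · exfalso
          have h1 := hco (Sum.inr 0)
          rw [hvalA2 p hcp hlfp hodp, hzero q _ hv0q] at h1
          omega
        · have h1 := hco (Sum.inl ⟨l0, hl0⟩)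
          rw [hvalC1 l0 hl0 p hcp (by rw [hlfp]; exact Ne.symm hl0s),
            hvalC1 l0 hl0 q hcq (by rw [hlfq]; exact Ne.symm hl0s)] at h1
          exact hsame_eq p q hcp hcq (hlfp.trans hlfq.symm) (by omega)
        · exfalso
          have h1 := hco (Sum.inr 0)
          rw [hvalA2 p hcp hlfp hodp, hzero q _ hv0q] at h1
          omega
        · exfalso
          have h1 := hco (Sum.inl ⟨l0, hl0⟩)
          rw [hvalC1 l0 hl0 p hcp (by rw [hlfp]; exact Ne.symm hl0s),
            hvalC1 l0 hl0 q hcq (by rw [hlfq]; exact Ne.symm hl0B)] at h1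
          have h2 := hco (Sum.inr 0)
          rw [hvalA2 p hcp hlfp hodp,
            hvalA1 q hcq hnsq (by rw [hlfq]; exact hABne.symm)] at h2
          have := heven2 p hcp hodp
          omega
        · exfalso
          have h1 := hco (Sum.inl ⟨lf q, hPlq⟩)
          rw [hvalC1 (lf q) hPlq p hcp (by rw [hlfp]; exact Ne.symm hPlq.2.1),
            hzero q _ hv0q] at h1
          omega
        -- p : type A
        · exact absurd hcq0 hq
        · exfalso
          have h1 := hco (Sum.inr 1)
          rw [hvalB2 q hcq hlfq hodq, hvalB1 p hcp hnsp (by rw [hlfp]; exact hABne)] at h1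
          have := hdep_pos p hcp
          omega
        · exfalso
          have h1 := hco (Sum.inr 0)
          rw [hvalA2 q hcq hlfq hodq, hzero p _ hv0p] at h1
          omega
        · have h1 := hco (Sum.inr 1)
          rw [hvalB1 p hcp hnsp (by rw [hlfp]; exact hABne),
            hvalB1 q hcq hnsq (by rw [hlfq]; exact hABne)] at h1
          exact hsame_eq p q hcp hcq (hlfp.trans hlfq.symm) (by omega)
        · exfalso
          have h1 := hco (Sum.inr 0)
          rw [hzero p _ hv0p,
            hvalA1 q hcq hnsq (by rw [hlfq]; exact hABne.symm)] at h1
          have := hdep_pos q hcq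
          omega
        · exfalso
          have h1 := hco (Sum.inr 0)
          rw [hzero p _ hv0p, hvalA1 q hcq hPlq.2.1 hPlq.2.2.1] at h1
          have := hdep_pos q hcq
          omega
        -- p : type B
        · exact absurd hcq0 hq
        · exfalso
          have h1 := hco (Sum.inr 0)
          rw [hzero q _ hv0q,
            hvalA1 p hcp hnsp (by rw [hlfp]; exact hABne.symm)] at h1
          have := hdep_pos p hcp
          omega
        · exfalso
          have h1 := hco (Sum.inl ⟨l0, hl0⟩)
          rw [hvalC1 l0 hl0 q hcq (by rw [hlfq]; exact Ne.symm hl0s),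
            hvalC1 l0 hl0 p hcp (by rw [hlfp]; exact Ne.symm hl0B)] at h1
          have h2 := hco (Sum.inr 0)
          rw [hvalA2 q hcq hlfq hodq,
            hvalA1 p hcp hnsp (by rw [hlfp]; exact hABne.symm)] at h2
          have := heven2 q hcq hodq
          omega
        · exfalso
          have h1 := hco (Sum.inr 0)
          rw [hzero q _ hv0q,
            hvalA1 p hcp hnsp (by rw [hlfp]; exact hABne.symm)] at h1
          have := hdep_pos p hcp
          omega
        · have h1 := hco (Sum.inr 0)
          rw [hvalA1 p hcp hnsp (by rw [hlfp]; exact hABne.symm),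
            hvalA1 q hcq hnsq (by rw [hlfq]; exact hABne.symm)] at h1
          exact hsame_eq p q hcp hcq (hlfp.trans hlfq.symm) (by omega)
        · exfalso
          have h1 := hco (Sum.inl ⟨lf q, hPlq⟩)
          rw [hvalC1 (lf q) hPlq p hcp (by rw [hlfp]; exact Ne.symm hPlq.2.2.2),
            hzero q _ hv0q] at h1
          omega
        -- p : type C
        · exact absurd hcq0 hq
        · exfalso
          have h1 := hco (Sum.inr 0)
          rw [hzero q _ hv0q, hvalA1 p hcp hPlp.2.1 hPlp.2.2.1] at h1
          have := hdep_pos p hcp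
          omega
        · exfalso
          have h1 := hco (Sum.inl ⟨lf p, hPlp⟩)
          rw [hvalC1 (lf p) hPlp q hcq (by rw [hlfq]; exact Ne.symm hPlp.2.1),
            hzero p _ hv0p] at h1
          omega
        · exfalso
          have h1 := hco (Sum.inr 0)
          rw [hzero q _ hv0q, hvalA1 p hcp hPlp.2.1 hPlp.2.2.1] at h1
          have := hdep_pos p hcp
          omega
        · exfalso
          have h1 := hco (Sum.inl ⟨lf p, hPlp⟩)
          rw [hvalC1 (lf p) hPlp q hcq (by rw [hlfq]; exact Ne.symm hPlp.2.2.2),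
            hzero p _ hv0p] at h1
          omega
        · by_cases hpq2 : lf p = lf q
          · have h1 := hco (Sum.inr 0)
            rw [hvalA1 p hcp hPlp.2.1 hPlp.2.2.1,
              hvalA1 q hcq hPlq.2.1 hPlq.2.2.1] at h1
            exact hsame_eq p q hcp hcq hpq2 (by omega)
          · exfalso
            have h1 := hco (Sum.inl ⟨lf p, hPlp⟩)
            rw [hzero p _ hv0p,
              hvalC1 (lf p) hPlp q hcq (fun he => hpq2 (he.symm ▸ rfl))] at h1
            have := hdep_pos q hcq
            omega
  have hsurj : Function.Surjective cc := by
    rintro (⟨l, hl⟩ | k)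
    · exact ⟨l, hmkC l (hleaf_ne l hl.1) l hl (hlf_id l hl.1)⟩
    · fin_cases k
      · exact ⟨c₀, hmk0⟩
      · exact ⟨lB, hmkB lB hlBc (hlf_id lB hlBleaf)⟩
  -- cardinality
  have hsub3 : ({ls, lA, lB} : Set V) ⊆ {v | IsLeaf G v} := by
    rintro z (rfl | rfl | rfl)
    · exact hlsleaf
    · exact hlAleaf
    · exact hlBleaf
  have h3card : ({ls, lA, lB} : Set V).ncard = 3 := by
    rw [Set.ncard_insert_of_notMem (by simp [Ne.symm hlAs, Ne.symm hlBs])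
      (Set.toFinite _), Set.ncard_pair hABne]
  have hsetP' : {v | P' v} = {v | IsLeaf G v} \ {ls, lA, lB} := by
    ext v
    simp only [hP'def, Set.mem_setOf_eq, Set.mem_diff, Set.mem_insert_iff,
      Set.mem_singleton_iff]
    tauto
  have hdiff3 : ({v | IsLeaf G v} \ {ls, lA, lB}).ncard = numLeaves G - 3 := by
    rw [Set.ncard_diff hsub3 (Set.toFinite _), h3card]
    rfl
  have hcardP' : Fintype.card {v // P' v} = numLeaves G - 3 := by
    have h1 : Nat.card {v // P' v} = Fintype.card {v // P' v} := Nat.card_eq_fintype_card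
    have h2 : Nat.card {v // P' v} = ({v | P' v}).ncard := Nat.card_coe_set_eq _
    rw [← h1, h2, hsetP', hdiff3]
  have hcardI : Fintype.card ({v // P' v} ⊕ Fin 2) = numLeaves G - 1 := by
    rw [Fintype.card_sum, hcardP']
    simp
    omega
  exact ⟨_, transport_partition cc hsurj hres (Fintype.equivFinOfCardEq hcardI)⟩

end Spider

/-- A tree with at least four leaves which is not a star satisfies `pd(T) < n₁(T)`,
i.e. it admits a resolving partition with fewer than `n₁(T)` classes. -/
theorem partitionDim_lt_numLeaves_of_not_isStar {V : Type*} [Fintype V] (G : SimpleGraph V)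
    (hT : G.IsTree) (hl : 4 ≤ numLeaves G) (hs : ¬ IsStar G) :
    partitionDim G < numLeaves G ∧
      ∃ t : ℕ, t < numLeaves G ∧ ∃ c : V → Fin t, IsResolvingPartition G c := by
  classical
  have hl3 : 3 ≤ {v | (G.neighborSet v).ncard = 1}.ncard := by
    have he : {v | (G.neighborSet v).ncard = 1} = {v | IsLeaf G v} := rfl
    rw [he]
    have hn : {v | IsLeaf G v}.ncard = numLeaves G := rfl
    omega
  obtain ⟨c₀, hc₀⟩ := TreeTK.exists_major hT hl3
  have hmain : ∃ t, t < numLeaves G ∧ ∃ c : V → Fin t, IsResolvingPartition G c := by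
    by_cases hone : ∀ v, 3 ≤ (G.neighborSet v).ncard → v = c₀
    · obtain ⟨c, hc⟩ := exists_partition_spider hT hl hs hc₀ hone
      exact ⟨numLeaves G - 1, by omega, c, hc⟩
    · push_neg at hone
      obtain ⟨w, hw3, hwne⟩ := hone
      obtain ⟨c, hc⟩ := exists_partition_two_majors hT hl hc₀ hw3 (Ne.symm hwne)
      exact ⟨numLeaves G - 1, by omega, c, hc⟩
  obtain ⟨t, ht, c, hc⟩ := hmain
  refine ⟨?_, t, ht, c, hc⟩
  have h2 : partitionDim G ≤ t := Nat.sInf_le ⟨c, hc⟩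
  omega
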